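/- The number of equivalence classes (regions) of the region equivalence relation ~ on clock valuations over a finite set of clocks C with maximum values M : C → ℕ is finite. -/

import Mathlib

noncomputable def fracPart (a : ℝ) : ℝ := a - ⌊a⌋

def RegionEquiv {C : Type*} (M : C → ℕ) (v w : C → ℝ) : Prop :=
  ∀ c d : C,
    (⌊v c⌋ = ⌊w c⌋ ∨ ((M c : ℝ) < v c ∧ (M c : ℝ) < w c)) ∧
    (v c ≤ (M c : ℝ) → (fracPart (v c) = 0 ↔ fracPart (w c) = 0)) ∧
    (v c ≤ (M c : ℝ) → v d ≤ (M d : ℝ) →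
      (fracPart (v c) ≤ fracPart (v d) ↔ fracPart (w c) ≤ fracPart (w d)))

lemma fracPart_eq_fract (a : ℝ) : fracPart a = Int.fract a := rfl

lemma fracPart_nonneg (a : ℝ) : 0 ≤ fracPart a := Int.fract_nonneg a

lemma fracPart_lt_one (a : ℝ) : fracPart a < 1 := Int.fract_lt_one a

noncomputable def rk {C : Type*} (M : C → ℕ) (v : C → ℝ) (c : C) : ℕ :=
  if fracPart (v c) = 0 then 0
  else 1 + Set.ncard {d : C | v d ≤ (M d : ℝ) ∧ fracPart (v d) < fracPart (v c)}

lemma rk_eq_zero_iff {C : Type*} (M : C → ℕ) (v : C → ℝ) (c : C) :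
    rk M v c = 0 ↔ fracPart (v c) = 0 := by
  unfold rk
  split <;> simp_all

lemma rk_le_card {C : Type*} [Finite C] (M : C → ℕ) (v : C → ℝ) (c : C) :
    rk M v c ≤ Nat.card C := by
  unfold rk
  split
  · exact Nat.zero_le _
  · have hc : c ∉ {d : C | v d ≤ (M d : ℝ) ∧ fracPart (v d) < fracPart (v c)} := by
      simp
    have hss : {d : C | v d ≤ (M d : ℝ) ∧ fracPart (v d) < fracPart (v c)} ⊂ Set.univ :=
      ⟨Set.subset_univ _, fun h => hc (h (Set.mem_univ c))⟩
    have := Set.ncard_lt_ncard hss Set.finite_univ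
    rw [Set.ncard_univ] at this
    omega

lemma rk_mono {C : Type*} [Finite C] (M : C → ℕ) (v : C → ℝ) {c d : C}
    (h : fracPart (v c) ≤ fracPart (v d)) : rk M v c ≤ rk M v d := by
  unfold rk
  by_cases hc : fracPart (v c) = 0
  · simp [hc]
  · have hcpos : 0 < fracPart (v c) := lt_of_le_of_ne (fracPart_nonneg _) (Ne.symm hc)
    have hd : ¬ fracPart (v d) = 0 := by intro h0; rw [h0] at h; linarith
    rw [if_neg hc, if_neg hd]
    have hsub : {e : C | v e ≤ (M e : ℝ) ∧ fracPart (v e) < fracPart (v c)} ⊆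
        {e : C | v e ≤ (M e : ℝ) ∧ fracPart (v e) < fracPart (v d)} :=
      fun e ⟨he1, he2⟩ => ⟨he1, lt_of_lt_of_le he2 h⟩
    have := Set.ncard_le_ncard hsub (Set.finite_univ.subset (Set.subset_univ _))
    omega

lemma rk_strict_mono {C : Type*} [Finite C] (M : C → ℕ) (v : C → ℝ) {c d : C}
    (hd : v d ≤ (M d : ℝ))
    (h : fracPart (v d) < fracPart (v c)) : rk M v d < rk M v c := by
  have hc : ¬ fracPart (v c) = 0 := by
    have h0 : 0 ≤ fracPart (v d) := fracPart_nonneg _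
    intro h1; rw [h1] at h; linarith
  unfold rk
  rw [if_neg hc]
  by_cases hdz : fracPart (v d) = 0
  · rw [if_pos hdz]; omega
  · rw [if_neg hdz]
    have hss : {e : C | v e ≤ (M e : ℝ) ∧ fracPart (v e) < fracPart (v d)} ⊂
        {e : C | v e ≤ (M e : ℝ) ∧ fracPart (v e) < fracPart (v c)} := by
      refine ⟨fun e ⟨he1, he2⟩ => ⟨he1, lt_trans he2 h⟩, fun hsub => ?_⟩
      have hmem : d ∈ {e : C | v e ≤ (M e : ℝ) ∧ fracPart (v e) < fracPart (v d)} :=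
        hsub ⟨hd, h⟩
      exact lt_irrefl _ hmem.2
    have := Set.ncard_lt_ncard hss (Set.finite_univ.subset (Set.subset_univ _))
    omega

lemma rk_le_rk_iff {C : Type*} [Finite C] (M : C → ℕ) (v : C → ℝ) {c d : C}
    (hd : v d ≤ (M d : ℝ)) :
    fracPart (v c) ≤ fracPart (v d) ↔ rk M v c ≤ rk M v d := by
  refine ⟨rk_mono M v, fun h => ?_⟩
  by_contra hlt
  push_neg at hlt
  exact absurd h (Nat.not_le.mpr (rk_strict_mono M v hd hlt))

noncomputable def canon {C : Type*} (M : C → ℕ) (v : C → ℝ) (c : C) : ℝ :=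
  if v c ≤ (M c : ℝ) then (⌊v c⌋ : ℝ) + (rk M v c : ℝ) / ((Nat.card C : ℝ) + 1)
  else (M c : ℝ) + 1

lemma canon_frac_bounds {C : Type*} [Finite C] (M : C → ℕ) (v : C → ℝ) (c : C) :
    0 ≤ (rk M v c : ℝ) / ((Nat.card C : ℝ) + 1) ∧
    (rk M v c : ℝ) / ((Nat.card C : ℝ) + 1) < 1 := by
  have hN : (0 : ℝ) < (Nat.card C : ℝ) + 1 := by positivity
  refine ⟨by positivity, ?_⟩
  rw [div_lt_one hN]
  exact_mod_cast Nat.lt_succ_of_le (rk_le_card M v c)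

lemma canon_floor {C : Type*} [Finite C] (M : C → ℕ) (v : C → ℝ) {c : C}
    (hc : v c ≤ (M c : ℝ)) : ⌊canon M v c⌋ = ⌊v c⌋ := by
  obtain ⟨h0, h1⟩ := canon_frac_bounds M v c
  rw [canon, if_pos hc, Int.floor_intCast_add, Int.floor_eq_zero_iff.mpr ⟨h0, h1⟩]
  ring

lemma canon_fract {C : Type*} [Finite C] (M : C → ℕ) (v : C → ℝ) {c : C}
    (hc : v c ≤ (M c : ℝ)) :
    fracPart (canon M v c) = (rk M v c : ℝ) / ((Nat.card C : ℝ) + 1) := by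
  obtain ⟨h0, h1⟩ := canon_frac_bounds M v c
  rw [fracPart_eq_fract, canon, if_pos hc, Int.fract_intCast_add,
    Int.fract_eq_self.mpr ⟨h0, h1⟩]

lemma regionEquiv_canon {C : Type*} [Finite C] (M : C → ℕ) (v : C → ℝ) :
    RegionEquiv M v (canon M v) := by
  have hN : (0 : ℝ) < (Nat.card C : ℝ) + 1 := by positivity
  intro c d
  refine ⟨?_, ?_, ?_⟩
  · by_cases hc : v c ≤ (M c : ℝ)
    · exact Or.inl (canon_floor M v hc).symm
    · refine Or.inr ⟨lt_of_not_ge hc, ?_⟩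
      rw [canon, if_neg hc]; linarith
  · intro hc
    rw [canon_fract M v hc, div_eq_zero_iff]
    constructor
    · intro h
      exact Or.inl (by exact_mod_cast (rk_eq_zero_iff M v c).mpr h)
    · rintro (h | h)
      · exact (rk_eq_zero_iff M v c).mp (by exact_mod_cast h)
      · linarith
  · intro hc hd
    rw [canon_fract M v hc, canon_fract M v hd,
      div_le_div_iff_of_pos_right hN, Nat.cast_le]
    exact rk_le_rk_iff M v hd

noncomputable def dataOf {C : Type*} [Finite C] (M : C → ℕ)
    (v : {v : C → ℝ // ∀ c, 0 ≤ v c}) (c : C) : Fin (M c + 2) × Fin (Nat.card C + 1) :=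
  if h : v.1 c ≤ (M c : ℝ) then
    (⟨⌊v.1 c⌋.toNat, by
      have h1 : ⌊v.1 c⌋ ≤ (M c : ℤ) := by
        have := Int.floor_le_floor (R := ℝ) h
        simpa using this
      have h2 : (0 : ℤ) ≤ ⌊v.1 c⌋ := Int.floor_nonneg.mpr (v.2 c)
      omega⟩,
     ⟨rk M v.1 c, Nat.lt_succ_of_le (rk_le_card M v.1 c)⟩)
  else (⟨M c + 1, by omega⟩, ⟨0, by omega⟩)

lemma dataOf_spec {C : Type*} [Finite C] (M : C → ℕ)
    (v : {v : C → ℝ // ∀ c, 0 ≤ v c}) (c : C) :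
    (((dataOf M v c).1 : ℕ) : ℝ) + (((dataOf M v c).2 : ℕ) : ℝ) / ((Nat.card C : ℝ) + 1)
      = canon M v.1 c := by
  rw [dataOf]
  by_cases h : v.1 c ≤ (M c : ℝ)
  · rw [dif_pos h, canon, if_pos h]
    have h2 : (0 : ℤ) ≤ ⌊v.1 c⌋ := Int.floor_nonneg.mpr (v.2 c)
    have h3 : ((⌊v.1 c⌋.toNat : ℕ) : ℝ) = ((⌊v.1 c⌋ : ℤ) : ℝ) := by
      exact_mod_cast congrArg (fun z : ℤ => (z : ℝ)) (Int.toNat_of_nonneg h2)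
    simp [h3]
  · rw [dif_neg h, canon, if_neg h]
    push_cast
    ring

theorem region_classes_finite {C : Type*} [Finite C] (M : C → ℕ) :
    Finite (Quot (fun v w : {v : C → ℝ // ∀ c, 0 ≤ v c} =>
      RegionEquiv M v.1 w.1)) := by
  set r := fun v w : {v : C → ℝ // ∀ c, 0 ≤ v c} => RegionEquiv M v.1 w.1 with hr
  let F : (∀ c : C, Fin (M c + 2) × Fin (Nat.card C + 1)) → Quot r :=
    fun p => Quot.mk r ⟨fun c => (((p c).1 : ℕ) : ℝ) + (((p c).2 : ℕ) : ℝ) / ((Nat.card C : ℝ) + 1),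
      fun c => by positivity⟩
  apply Finite.of_surjective F
  intro q
  induction q using Quot.ind with
  | _ v =>
    refine ⟨dataOf M v, ?_⟩
    have hfun : (fun c => (((dataOf M v c).1 : ℕ) : ℝ) +
        (((dataOf M v c).2 : ℕ) : ℝ) / ((Nat.card C : ℝ) + 1)) = canon M v.1 :=
      funext (dataOf_spec M v)
    have hrel : r v ⟨fun c => (((dataOf M v c).1 : ℕ) : ℝ) +
        (((dataOf M v c).2 : ℕ) : ℝ) / ((Nat.card C : ℝ) + 1), fun c => by positivity⟩ := by
      have h := regionEquiv_canon M v.1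
      rw [← hfun] at h
      exact h
    exact (Quot.sound hrel).symm
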